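/- arXiv:2405.20338 — 2 statements merged into one kernel-verified Lean document; each statement's English description precedes it below -/
import Mathlib

section
/- Let u_κ solve the penalized problem ∫_ω (∂_{αβ}u_κ)(∂_{αβ}v) dy − (1/κ)∫_ω {u_κ−θ}⁻ v dy = ∫_ω f v dy for all v ∈ H²₀(ω). Then ‖u_κ‖_{H²₀(ω)} ≤ c_P² ‖f‖_{L²(ω)} and ‖{u_κ−θ}⁻‖_{L²(ω)} ≤ c_P ‖f‖_{L²(ω)} √κ, where c_P is the Poincaré–Friedrichs constant for fourth-order operators; in particular the family {u_κ} is bounded in H²₀(ω) uniformly in κ. -/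
noncomputable section
open MeasureTheory Real

abbrev E2 := EuclideanSpace ℝ (Fin 2)

def pd (i : Fin 2) (f : E2 → ℝ) (x : E2) : ℝ :=
  fderiv ℝ f x (EuclideanSpace.single i 1)

def pd2 (i j : Fin 2) (f : E2 → ℝ) : E2 → ℝ :=
  pd i (fun x => pd j f x)

def negPartF (f : E2 → ℝ) : E2 → ℝ := fun y => -min (f y) 0

section helpers
variable {α : Type*} [MeasurableSpace α] {μ : Measure α}

lemma inner_toLp_eq {f g : α → ℝ} (hf : MemLp f 2 μ) (hg : MemLp g 2 μ) :
    (inner ℝ (hf.toLp f) (hg.toLp g) : ℝ) = ∫ y, f y * g y ∂μ := by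
  rw [MeasureTheory.L2.inner_def]
  apply integral_congr_ae
  filter_upwards [hf.coeFn_toLp, hg.coeFn_toLp] with y h1 h2
  simp [h1, h2, RCLike.inner_apply, mul_comm]

lemma mul_integrable {f g : α → ℝ} (hf : MemLp f 2 μ) (hg : MemLp g 2 μ) :
    Integrable (fun y => f y * g y) μ := by
  have := MeasureTheory.L2.integrable_inner (𝕜 := ℝ) (hf.toLp f) (hg.toLp g)
  apply this.congr
  filter_upwards [hf.coeFn_toLp, hg.coeFn_toLp] with y h1 h2
  simp [h1, h2, RCLike.inner_apply, mul_comm]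

lemma sqrt_int_sq_eq {f : α → ℝ} (hf : MemLp f 2 μ) :
    Real.sqrt (∫ y, f y ^ 2 ∂μ) = ‖hf.toLp f‖ := by
  have h := inner_toLp_eq hf hf
  have h2 : (inner ℝ (hf.toLp f) (hf.toLp f) : ℝ) = ‖hf.toLp f‖ ^ 2 :=
    real_inner_self_eq_norm_sq _
  have : ∫ y, f y ^ 2 ∂μ = ‖hf.toLp f‖ ^ 2 := by
    rw [← h2, h]; congr 1; ext y; ring
  rw [this, Real.sqrt_sq (norm_nonneg _)]

lemma cauchy_schwarz_int {f g : α → ℝ} (hf : MemLp f 2 μ) (hg : MemLp g 2 μ) :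
    ∫ y, f y * g y ∂μ ≤ Real.sqrt (∫ y, f y ^ 2 ∂μ) * Real.sqrt (∫ y, g y ^ 2 ∂μ) := by
  rw [← inner_toLp_eq hf hg, sqrt_int_sq_eq hf, sqrt_int_sq_eq hg]
  exact real_inner_le_norm _ _

end helpers

/-- energy estimates for the penalized problem: if `u_κ` solves
`∫_ω ∂_{αβ}u_κ ∂_{αβ}v − (1/κ)∫_ω {u_κ−θ}⁻ v = ∫_ω f v` for all `v ∈ H²₀(ω)`, then
`‖u_κ‖_{H²₀(ω)} ≤ c_P² ‖f‖_{L²(ω)}` and `‖{u_κ−θ}⁻‖_{L²(ω)} ≤ c_P ‖f‖_{L²(ω)} √κ`,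
where `c_P` is the Poincaré–Friedrichs constant (`‖v‖ ≤ c_P |v|_{H²₀}`); in particular the
family `{u_κ}` is bounded in `H²₀(ω)` uniformly in `κ`.  The Hilbert space `H` plays the role
of `H²₀(ω)` (realized as functions via `ι`). -/
theorem stmt_6
    (ω : Set E2) (hω : IsOpen ω) (hbd : Bornology.IsBounded ω)
    (H : Type*) [NormedAddCommGroup H] [InnerProductSpace ℝ H] [CompleteSpace H]
    (ι : H →ₗ[ℝ] (E2 → ℝ))
    (hL2 : ∀ v : H, MemLp (ι v) 2 (volume.restrict ω))
    (hL2le : ∀ v : H, Real.sqrt (∫ y in ω, (ι v y) ^ 2) ≤ ‖v‖)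
    (cP : ℝ) (hcP : 0 < cP)
    (hPF : ∀ v : H, ‖v‖ ≤ cP *
      Real.sqrt (∫ y in ω, ∑ α : Fin 2, ∑ β : Fin 2, (pd2 α β (ι v) y) ^ 2))
    (θ : E2 → ℝ) (hθ : ContinuousOn θ (closure ω)) (hθneg : ∀ y ∈ closure ω, θ y < 0)
    (f : E2 → ℝ) (hf : MemLp f 2 (volume.restrict ω))
    (κ : ℝ) (hκ : 0 < κ)
    (u : H)
    (hu : ∀ v : H,
      (∫ y in ω, ∑ α : Fin 2, ∑ β : Fin 2, pd2 α β (ι u) y * pd2 α β (ι v) y)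
          - (1 / κ) * ∫ y in ω, negPartF (fun x => ι u x - θ x) y * ι v y
        = ∫ y in ω, f y * ι v y) :
    ‖u‖ ≤ cP ^ 2 * Real.sqrt (∫ y in ω, (f y) ^ 2) ∧
    Real.sqrt (∫ y in ω, (negPartF (fun x => ι u x - θ x) y) ^ 2)
      ≤ cP * Real.sqrt (∫ y in ω, (f y) ^ 2) * Real.sqrt κ := by
  have hms := hω.measurableSet
  haveI : IsFiniteMeasure (volume.restrict ω) :=
    ⟨by rw [Measure.restrict_apply_univ]; exact hbd.measure_lt_top⟩
  set n : E2 → ℝ := negPartF (fun x => ι u x - θ x) with hn_def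
  -- θ is in L²
  have hθsm : AEStronglyMeasurable θ (volume.restrict ω) :=
    (hθ.mono subset_closure).aestronglyMeasurable hms
  obtain ⟨C, hC⟩ := (hbd.isCompact_closure).exists_bound_of_continuousOn hθ
  have hθm : MemLp θ 2 (volume.restrict ω) :=
    MemLp.of_bound hθsm C <|
      (ae_restrict_iff' hms).2 (Filter.Eventually.of_forall fun y hy => hC y (subset_closure hy))
  -- u - θ and n in L²
  have hg : MemLp (fun x => ι u x - θ x) 2 (volume.restrict ω) := (hL2 u).sub hθm
  have hnsm : AEStronglyMeasurable n (volume.restrict ω) := by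
    have h1 : AEMeasurable (fun x => min (ι u x - θ x) 0) (volume.restrict ω) :=
      hg.aestronglyMeasurable.aemeasurable.min (aemeasurable_const (b := (0:ℝ)))
    have h2 : AEMeasurable (fun x => -min (ι u x - θ x) 0) (volume.restrict ω) := h1.neg
    exact h2.aestronglyMeasurable
  have hn : MemLp n 2 (volume.restrict ω) := by
    apply hg.of_le hnsm
    apply Filter.Eventually.of_forall
    intro y
    simp only [hn_def, negPartF, norm_neg, Real.norm_eq_abs]
    rcases le_total (ι u y - θ y) 0 with h | h
    · rw [min_eq_left h]
    · rw [min_eq_right h]; simp [abs_nonneg]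
  have hn0 : ∀ y, 0 ≤ n y := fun y => by
    simp only [hn_def, negPartF]; simp [min_le_right]
  -- abbreviations
  set A : ℝ := ∫ y in ω, ∑ α : Fin 2, ∑ β : Fin 2, (pd2 α β (ι u) y) ^ 2 with hA_def
  set N : ℝ := ∫ y in ω, (n y) ^ 2 with hN_def
  set T : ℝ := ∫ y in ω, n y * θ y with hT_def
  set P : ℝ := ∫ y in ω, f y * ι u y with hP_def
  set F : ℝ := Real.sqrt (∫ y in ω, (f y) ^ 2) with hF_def
  have hF0 : 0 ≤ F := Real.sqrt_nonneg _
  have hA0 : 0 ≤ A := setIntegral_nonneg hms fun y _ => by positivity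
  have hN0 : 0 ≤ N := setIntegral_nonneg hms fun y _ => sq_nonneg _
  -- the equation with v = u
  have heq : A - (1 / κ) * (∫ y in ω, n y * ι u y) = P := by
    have h := hu u
    have hrw : (fun y => ∑ α : Fin 2, ∑ β : Fin 2, pd2 α β (ι u) y * pd2 α β (ι u) y)
        = fun y => ∑ α : Fin 2, ∑ β : Fin 2, (pd2 α β (ι u) y) ^ 2 := by
      funext y; congr 1 with α; congr 1 with β; ring
    rw [show (∫ y in ω, ∑ α : Fin 2, ∑ β : Fin 2, pd2 α β (ι u) y * pd2 α β (ι u) y)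
        = A from by rw [hA_def]; exact integral_congr_ae (Filter.Eventually.of_forall
          fun y => congrFun hrw y)] at h
    exact h
  -- split the penalty integral
  have hI : (∫ y in ω, n y * ι u y) = -N + T := by
    have hpt : ∀ y, n y * ι u y = -(n y * n y) + n y * θ y := by
      intro y
      simp only [hn_def, negPartF]
      rcases le_total (ι u y - θ y) 0 with h | h
      · rw [min_eq_left h]; ring
      · rw [min_eq_right h]; ring
    have h5 : (∫ y in ω, n y * ι u y) = ∫ y in ω, (n y * θ y - n y * n y) :=
      integral_congr_ae (Filter.Eventually.of_forall fun y => by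
        show n y * ι u y = n y * θ y - n y * n y
        rw [hpt y]; ring)
    have h6 : (∫ y in ω, n y * n y) = N := by
      rw [hN_def]
      exact integral_congr_ae (Filter.Eventually.of_forall fun y => by
        show n y * n y = n y ^ 2
        ring)
    rw [h5, integral_sub (mul_integrable hn hθm) (mul_integrable hn hn), h6, hT_def]
    ring
  have hT0 : T ≤ 0 := by
    apply setIntegral_nonpos_of_ae_restrict
    refine (ae_restrict_iff' hms).2 (Filter.Eventually.of_forall fun y hy => ?_)
    have hθy := (hθneg y (subset_closure hy)).le
    simp only [Pi.zero_apply]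
    nlinarith [hn0 y]
  have h1κ : (0:ℝ) < 1 / κ := by positivity
  have heq2 : A + (1 / κ) * N = P + (1 / κ) * T := by
    rw [hI] at heq; ring_nf; ring_nf at heq; linarith
  have hTκ : (1 / κ) * T ≤ 0 := by
    have := mul_le_mul_of_nonneg_left hT0 h1κ.le
    simpa using this
  have hNκ : 0 ≤ (1 / κ) * N := mul_nonneg h1κ.le hN0
  have hAP : A ≤ P := by linarith
  have hNP : (1 / κ) * N ≤ P := by linarith
  -- Cauchy–Schwarz
  have hP : P ≤ F * ‖u‖ := by
    calc P ≤ Real.sqrt (∫ y in ω, (f y) ^ 2) * Real.sqrt (∫ y in ω, (ι u y) ^ 2) :=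
          cauchy_schwarz_int hf (hL2 u)
      _ ≤ F * ‖u‖ := mul_le_mul_of_nonneg_left (hL2le u) hF0
  -- first estimate
  have hu2 : ‖u‖ ^ 2 ≤ cP ^ 2 * A := by
    have h := hPF u
    rw [← hA_def] at h
    nlinarith [Real.sq_sqrt hA0, Real.sqrt_nonneg A, norm_nonneg u]
  have goal1 : ‖u‖ ≤ cP ^ 2 * F := by
    rcases eq_or_lt_of_le (norm_nonneg u) with h0 | h0
    · rw [← h0]; positivity
    · have h : ‖u‖ * ‖u‖ ≤ (cP ^ 2 * F) * ‖u‖ := by nlinarith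
      exact le_of_mul_le_mul_right h h0
  refine ⟨goal1, ?_⟩
  -- second estimate
  have h2 : P ≤ cP ^ 2 * F ^ 2 := by nlinarith
  have hNb : N ≤ κ * (cP * F) ^ 2 := by
    have h3 := mul_le_mul_of_nonneg_left (hNP.trans h2) hκ.le
    have h4 : κ * ((1 / κ) * N) = N := by field_simp
    rw [h4] at h3
    nlinarith
  calc Real.sqrt N ≤ Real.sqrt (κ * (cP * F) ^ 2) := Real.sqrt_le_sqrt hNb
    _ = cP * F * Real.sqrt κ := by
        rw [Real.sqrt_mul hκ.le, Real.sqrt_sq (by positivity)]; ring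
end
end

section
/- Let (u_κ, ξ⃗_κ) be the unique solution of the penalized mixed problem (Problem Q_κ). Then ‖ξ⃗_κ‖_{H¹₀(ω)²} ≤ c_P² ‖F⃗‖_{L²(ω)²}, ‖{u_κ−θ}⁻‖_{L²(ω)} ≤ c_P‖F⃗‖_{L²}√κ, ‖ξ⃗_κ − ∇u_κ‖_{L²(ω)²} ≤ c_P‖F⃗‖_{L²}√κ, and ‖u_κ‖_{H¹₀(ω)} ≤ c_P²‖F⃗‖_{L²}(√κ + c_P); in particular all these families are bounded uniformly in κ. -/
set_option maxHeartbeats 1000000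


noncomputable section
open MeasureTheory Real

/-- The variational equation of the penalized mixed problem `Q_κ`. -/
def MixedEq (ω : Set E2) (θ : E2 → ℝ) (F : Fin 2 → E2 → ℝ) (κ : ℝ)
    {H : Type*} [NormedAddCommGroup H] [InnerProductSpace ℝ H]
    (ι : H →ₗ[ℝ] (E2 → ℝ)) (u : H) (ξ : Fin 2 → H) (v : H) (η : Fin 2 → H) : Prop :=
  κ * (∫ y in ω, ∑ i : Fin 2, pd i (ι u) y * pd i (ι v) y)
    + (∫ y in ω, ∑ α : Fin 2, ∑ β : Fin 2, pd α (ι (ξ β)) y * pd α (ι (η β)) y)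
    - (1 / κ) * (∫ y in ω, negPartF (fun x => ι u x - θ x) y * ι v y)
    + (1 / κ) * (∫ y in ω, ∑ i : Fin 2,
        (pd i (ι u) y - ι (ξ i) y) * (pd i (ι v) y - ι (η i) y))
  = - ∫ y in ω, ∑ i : Fin 2, F i y * ι (η i) y

section Aux

variable {α : Type*} [MeasurableSpace α] {μ : Measure α}

lemma aux_integrable_mul {f g : α → ℝ} (hf : MemLp f 2 μ) (hg : MemLp g 2 μ) :
    Integrable (fun x => f x * g x) μ := by
  have hint : Integrable (fun x => (f x ^ 2 + g x ^ 2) / 2) μ :=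
    (hf.integrable_sq.add hg.integrable_sq).div_const 2
  refine Integrable.mono' hint
    (hf.aestronglyMeasurable.mul hg.aestronglyMeasurable) (Filter.Eventually.of_forall fun x => ?_)
  rw [Real.norm_eq_abs, abs_mul]
  nlinarith [sq_nonneg (|f x| - |g x|), sq_abs (f x), sq_abs (g x), abs_nonneg (f x),
    abs_nonneg (g x)]

lemma aux_CS {f g : α → ℝ} (hf : MemLp f 2 μ) (hg : MemLp g 2 μ) :
    ∫ a, f a * g a ∂μ ≤ Real.sqrt (∫ a, f a ^ 2 ∂μ) * Real.sqrt (∫ a, g a ^ 2 ∂μ) := by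
  have h2 : (2 : ℝ).HolderConjugate 2 := Real.holderConjugate_iff.mpr ⟨one_lt_two, by norm_num⟩
  have hf2 : MemLp f (ENNReal.ofReal 2) μ := by rw [ENNReal.ofReal_ofNat]; exact hf
  have hg2 : MemLp g (ENNReal.ofReal 2) μ := by rw [ENNReal.ofReal_ofNat]; exact hg
  have key := integral_mul_norm_le_Lp_mul_Lq h2 hf2 hg2
  have e1 : ∀ h : α → ℝ, (∫ a, ‖h a‖ ^ (2 : ℝ) ∂μ) = ∫ a, h a ^ 2 ∂μ := by
    intro h
    refine integral_congr_ae (Filter.Eventually.of_forall fun a => ?_)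
    show ‖h a‖ ^ (2 : ℝ) = h a ^ 2
    rw [show (2 : ℝ) = ((2 : ℕ) : ℝ) by norm_num, Real.rpow_natCast, Real.norm_eq_abs, sq_abs]
  rw [e1 f, e1 g] at key
  calc ∫ a, f a * g a ∂μ ≤ ∫ a, ‖f a‖ * ‖g a‖ ∂μ := by
        refine integral_mono (aux_integrable_mul hf hg) ?_ fun a => ?_
        · have := aux_integrable_mul hf.norm hg.norm
          simpa using this
        · calc f a * g a ≤ |f a * g a| := le_abs_self _
            _ = ‖f a‖ * ‖g a‖ := by rw [abs_mul]; rfl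
    _ ≤ (∫ a, f a ^ 2 ∂μ) ^ ((1 : ℝ) / 2) * (∫ a, g a ^ 2 ∂μ) ^ ((1 : ℝ) / 2) := key
    _ = Real.sqrt (∫ a, f a ^ 2 ∂μ) * Real.sqrt (∫ a, g a ^ 2 ∂μ) := by
        rw [Real.sqrt_eq_rpow, Real.sqrt_eq_rpow]

lemma aux_sum2_CS {a b : Fin 2 → ℝ} (ha : ∀ i, 0 ≤ a i) (hb : ∀ i, 0 ≤ b i) :
    ∑ i : Fin 2, Real.sqrt (a i) * Real.sqrt (b i)
      ≤ Real.sqrt (∑ i : Fin 2, a i) * Real.sqrt (∑ i : Fin 2, b i) := by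
  simp only [Fin.sum_univ_two]
  have s0 := Real.sqrt_nonneg (a 0); have s1 := Real.sqrt_nonneg (a 1)
  have t0 := Real.sqrt_nonneg (b 0); have t1 := Real.sqrt_nonneg (b 1)
  have sa := Real.sqrt_nonneg (a 0 + a 1); have sb := Real.sqrt_nonneg (b 0 + b 1)
  have ha0 := Real.mul_self_sqrt (ha 0); have ha1 := Real.mul_self_sqrt (ha 1)
  have hb0 := Real.mul_self_sqrt (hb 0); have hb1 := Real.mul_self_sqrt (hb 1)
  have hA := Real.mul_self_sqrt (add_nonneg (ha 0) (ha 1))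
  have hB := Real.mul_self_sqrt (add_nonneg (hb 0) (hb 1))
  nlinarith [sq_nonneg (Real.sqrt (a 0) * Real.sqrt (b 1) - Real.sqrt (a 1) * Real.sqrt (b 0)),
    sq_nonneg (Real.sqrt (a 0) * Real.sqrt (b 0) + Real.sqrt (a 1) * Real.sqrt (b 1)
      - Real.sqrt (a 0 + a 1) * Real.sqrt (b 0 + b 1)),
    sq_nonneg (Real.sqrt (a 0) * Real.sqrt (b 0) + Real.sqrt (a 1) * Real.sqrt (b 1)
      + Real.sqrt (a 0 + a 1) * Real.sqrt (b 0 + b 1)),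
    mul_nonneg sa sb, mul_nonneg (mul_nonneg s0 t0) (mul_nonneg s1 t1)]

lemma aux_CS2 {f g : Fin 2 → α → ℝ} (hf : ∀ i, MemLp (f i) 2 μ) (hg : ∀ i, MemLp (g i) 2 μ) :
    ∫ a, ∑ i : Fin 2, f i a * g i a ∂μ
      ≤ Real.sqrt (∫ a, ∑ i : Fin 2, f i a ^ 2 ∂μ) *
        Real.sqrt (∫ a, ∑ i : Fin 2, g i a ^ 2 ∂μ) := by
  rw [integral_finset_sum _ (fun i _ => aux_integrable_mul (hf i) (hg i)),
    integral_finset_sum _ (fun i _ => (hf i).integrable_sq),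
    integral_finset_sum _ (fun i _ => (hg i).integrable_sq)]
  calc ∑ i : Fin 2, ∫ a, f i a * g i a ∂μ
      ≤ ∑ i : Fin 2, Real.sqrt (∫ a, f i a ^ 2 ∂μ) * Real.sqrt (∫ a, g i a ^ 2 ∂μ) :=
        Finset.sum_le_sum fun i _ => aux_CS (hf i) (hg i)
    _ ≤ _ := aux_sum2_CS (fun i => integral_nonneg fun a => sq_nonneg _)
        (fun i => integral_nonneg fun a => sq_nonneg _)

lemma aux_sqrt_le_of_le_mul_sqrt {B c : ℝ} (hB : 0 ≤ B) (hc : 0 ≤ c)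
    (h : B ≤ c * Real.sqrt B) : Real.sqrt B ≤ c := by
  have h1 := Real.mul_self_sqrt hB
  have h2 := Real.sqrt_nonneg B
  nlinarith

lemma aux_sqrt_le_of_sq_le {x c : ℝ} (hc : 0 ≤ c) (h : x ≤ c ^ 2) : Real.sqrt x ≤ c := by
  calc Real.sqrt x ≤ Real.sqrt (c ^ 2) := Real.sqrt_le_sqrt h
    _ = c := Real.sqrt_sq hc

end Aux

/-- a priori estimates for the solution `(u_κ, ξ⃗_κ)` of the penalized mixed
problem `Q_κ`: `‖ξ⃗_κ‖_{H¹₀²} ≤ c_P²‖F⃗‖`, `‖{u_κ−θ}⁻‖_{L²} ≤ c_P‖F⃗‖√κ`,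
`‖ξ⃗_κ − ∇u_κ‖_{L²} ≤ c_P‖F⃗‖√κ` and `‖u_κ‖_{H¹₀} ≤ c_P²‖F⃗‖(√κ + c_P)`; in particular all
these families are bounded uniformly in `κ`.  `H` plays the role of `H¹₀(ω)` via `ι`, and `c_P`
is the Poincaré–Friedrichs constant. -/
theorem stmt_10
    (ω : Set E2) (hω : IsOpen ω) (hbd : Bornology.IsBounded ω)
    (H : Type*) [NormedAddCommGroup H] [InnerProductSpace ℝ H] [CompleteSpace H]
    (ι : H →ₗ[ℝ] (E2 → ℝ))
    (hL2 : ∀ v : H, MemLp (ι v) 2 (volume.restrict ω))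
    (hgradL2 : ∀ v : H, ∀ i, MemLp (pd i (ι v)) 2 (volume.restrict ω))
    (cP : ℝ) (hcP : 0 < cP)
    (hPF : ∀ v : H, ‖v‖ ≤ cP *
      Real.sqrt (∫ y in ω, ∑ i : Fin 2, (pd i (ι v) y) ^ 2))
    (hL2le : ∀ v : H, Real.sqrt (∫ y in ω, (ι v y) ^ 2) ≤ ‖v‖)
    (θ : E2 → ℝ) (hθ : ContinuousOn θ (closure ω)) (hθneg : ∀ y ∈ closure ω, θ y < 0)
    (F : Fin 2 → E2 → ℝ) (hF : ∀ i, MemLp (F i) 2 (volume.restrict ω))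
    (κ : ℝ) (hκ : 0 < κ)
    (u : H) (ξ : Fin 2 → H)
    (hsol : ∀ (v : H) (η : Fin 2 → H), MixedEq ω θ F κ ι u ξ v η) :
    Real.sqrt (∑ i : Fin 2, ‖ξ i‖ ^ 2)
        ≤ cP ^ 2 * Real.sqrt (∫ y in ω, ∑ i : Fin 2, (F i y) ^ 2) ∧
    Real.sqrt (∫ y in ω, (negPartF (fun x => ι u x - θ x) y) ^ 2)
        ≤ cP * Real.sqrt (∫ y in ω, ∑ i : Fin 2, (F i y) ^ 2) * Real.sqrt κ ∧
    Real.sqrt (∫ y in ω, ∑ i : Fin 2, (ι (ξ i) y - pd i (ι u) y) ^ 2)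
        ≤ cP * Real.sqrt (∫ y in ω, ∑ i : Fin 2, (F i y) ^ 2) * Real.sqrt κ ∧
    ‖u‖ ≤ cP ^ 2 * Real.sqrt (∫ y in ω, ∑ i : Fin 2, (F i y) ^ 2) * (Real.sqrt κ + cP) := by
  classical
  set μ : Measure E2 := volume.restrict ω with hμ
  set n : E2 → ℝ := negPartF (fun x => ι u x - θ x) with hn_def
  -- the penalty function is in L²
  have hcomp : IsCompact (closure ω) := hbd.isCompact_closure
  obtain ⟨Cθ, hCθ⟩ := hcomp.exists_bound_of_continuousOn hθ
  have hθmeas : AEStronglyMeasurable θ μ :=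
    (hθ.mono subset_closure).aestronglyMeasurable hω.measurableSet
  have hμfin : IsFiniteMeasure μ := by
    constructor
    rw [hμ, Measure.restrict_apply_univ]
    exact lt_of_le_of_lt (measure_mono subset_closure) hcomp.measure_lt_top
  have hθL2 : MemLp θ 2 μ :=
    MemLp.of_bound hθmeas Cθ <|
      (ae_restrict_iff' hω.measurableSet).2
        (Filter.Eventually.of_forall fun y hy => hCθ y (subset_closure hy))
  have hdL2 : MemLp (fun y => ι u y - θ y) 2 μ := (hL2 u).sub hθL2
  have hnmeas : AEStronglyMeasurable n μ := by
    have : Continuous fun t : ℝ => -min t 0 := (continuous_id.min continuous_const).neg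
    exact this.comp_aestronglyMeasurable hdL2.aestronglyMeasurable
  have hnL2 : MemLp n 2 μ := by
    refine hdL2.of_le hnmeas (Filter.Eventually.of_forall fun y => ?_)
    simp only [hn_def, negPartF, Real.norm_eq_abs, abs_neg]
    rcases le_total (ι u y - θ y) 0 with h | h
    · rw [min_eq_left h]
    · rw [min_eq_right h]; simp [abs_nonneg]
  -- the main equation tested with (u, ξ)
  have heq := hsol u ξ
  rw [MixedEq] at heq
  simp only [← pow_two] at heq
  set A : ℝ := ∫ y in ω, ∑ i : Fin 2, pd i (ι u) y ^ 2 with hA_def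
  set B : ℝ := ∫ y in ω, ∑ α : Fin 2, ∑ β : Fin 2, pd α (ι (ξ β)) y ^ 2 with hB_def
  set C : ℝ := ∫ y in ω, n y * ι u y with hC_def
  set D : ℝ := ∫ y in ω, ∑ i : Fin 2, (pd i (ι u) y - ι (ξ i) y) ^ 2 with hD_def
  set N : ℝ := ∫ y in ω, n y ^ 2 with hN_def
  set E : ℝ := ∫ y in ω, ∑ i : Fin 2, F i y * ι (ξ i) y with hE_def
  set G : ℝ := ∫ y in ω, ∑ i : Fin 2, ι (ξ i) y ^ 2 with hG_def
  set MF : ℝ := Real.sqrt (∫ y in ω, ∑ i : Fin 2, F i y ^ 2) with hMF_def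
  clear_value A B C D N E G MF
  have hA0 : 0 ≤ A := hA_def ▸ setIntegral_nonneg hω.measurableSet fun y _ =>
    Finset.sum_nonneg fun i _ => sq_nonneg _
  have hB0 : 0 ≤ B := hB_def ▸ setIntegral_nonneg hω.measurableSet fun y _ =>
    Finset.sum_nonneg fun i _ => Finset.sum_nonneg fun j _ => sq_nonneg _
  have hD0 : 0 ≤ D := hD_def ▸ setIntegral_nonneg hω.measurableSet fun y _ =>
    Finset.sum_nonneg fun i _ => sq_nonneg _
  have hN0 : 0 ≤ N := hN_def ▸ setIntegral_nonneg hω.measurableSet fun y _ => sq_nonneg _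
  have hG0 : 0 ≤ G := hG_def ▸ setIntegral_nonneg hω.measurableSet fun y _ =>
    Finset.sum_nonneg fun i _ => sq_nonneg _
  have hMF0 : 0 ≤ MF := hMF_def ▸ Real.sqrt_nonneg _
  -- the penalty term: C ≤ -N
  have hCle : C ≤ -N := by
    rw [hC_def, hN_def]
    have h1 : (∫ y in ω, n y * ι u y) ≤ ∫ y in ω, -(n y ^ 2) := by
      refine setIntegral_mono_on (aux_integrable_mul hnL2 (hL2 u)) hnL2.integrable_sq.neg
        hω.measurableSet fun y hy => ?_
      have hθy := hθneg y (subset_closure hy)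
      simp only [hn_def, negPartF]
      rcases le_total (ι u y - θ y) 0 with h | h
      · rw [min_eq_left h]; nlinarith
      · rw [min_eq_right h]; simp
    rwa [integral_neg] at h1
  -- the right-hand side bound
  have hErev : (∫ y in ω, ∑ i : Fin 2, F i y * -(ι (ξ i) y)) = -E := by
    rw [hE_def, ← integral_neg]
    refine integral_congr_ae (Filter.Eventually.of_forall fun y => ?_)
    simp [mul_neg, Finset.sum_neg_distrib]
  have hGneg : (∫ y in ω, ∑ i : Fin 2, (-(ι (ξ i) y)) ^ 2) = G := by
    rw [hG_def]
    exact integral_congr_ae (Filter.Eventually.of_forall fun y => by simp [neg_sq])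
  have hEbound : -E ≤ MF * Real.sqrt G := by
    have h := aux_CS2 (μ := μ) (f := F) (g := fun i y => -(ι (ξ i) y)) hF
      (fun i => (hL2 (ξ i)).neg)
    rw [hErev, hGneg] at h
    rw [hMF_def]
    exact h
  -- B as a sum of componentwise integrals
  have hBsum : B = ∑ β : Fin 2, ∫ y in ω, ∑ α : Fin 2, pd α (ι (ξ β)) y ^ 2 := by
    rw [hB_def, ← integral_finset_sum _ (fun β _ =>
      integrable_finset_sum _ fun α _ => (hgradL2 (ξ β) α).integrable_sq)]
    exact integral_congr_ae (Filter.Eventually.of_forall fun y => Finset.sum_comm)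
  -- ∑ ‖ξ i‖² ≤ cP² B
  have hxisum : ∑ i : Fin 2, ‖ξ i‖ ^ 2 ≤ cP ^ 2 * B := by
    rw [hBsum, Finset.mul_sum]
    refine Finset.sum_le_sum fun β _ => ?_
    have h1 := hPF (ξ β)
    have h2 : 0 ≤ ∫ y in ω, ∑ α : Fin 2, pd α (ι (ξ β)) y ^ 2 :=
      setIntegral_nonneg hω.measurableSet fun y _ => Finset.sum_nonneg fun i _ => sq_nonneg _
    have h3 := Real.sq_sqrt h2
    nlinarith [norm_nonneg (ξ β), Real.sqrt_nonneg (∫ y in ω, ∑ α : Fin 2, pd α (ι (ξ β)) y ^ 2),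
      mul_nonneg hcP.le (Real.sqrt_nonneg (∫ y in ω, ∑ α : Fin 2, pd α (ι (ξ β)) y ^ 2))]
  -- G ≤ ∑ ‖ξ i‖²
  have hGle : G ≤ ∑ i : Fin 2, ‖ξ i‖ ^ 2 := by
    rw [hG_def, integral_finset_sum _ (fun i _ => (hL2 (ξ i)).integrable_sq)]
    refine Finset.sum_le_sum fun i _ => ?_
    have h1 := hL2le (ξ i)
    have h2 : 0 ≤ ∫ y in ω, ι (ξ i) y ^ 2 :=
      setIntegral_nonneg hω.measurableSet fun y _ => sq_nonneg _
    have h3 := Real.sq_sqrt h2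
    nlinarith [Real.sqrt_nonneg (∫ y in ω, ι (ξ i) y ^ 2), norm_nonneg (ξ i)]
  have hsqG : Real.sqrt G ≤ cP * Real.sqrt B := by
    have h1 : G ≤ (cP * Real.sqrt B) ^ 2 := by
      have := Real.sq_sqrt hB0
      nlinarith [hGle, hxisum]
    exact aux_sqrt_le_of_sq_le (mul_nonneg hcP.le (Real.sqrt_nonneg B)) h1
  -- the key energy estimate
  have hκ' : 0 < 1 / κ := by positivity
  have key : κ * A + B + (1 / κ) * N + (1 / κ) * D ≤ cP * MF * Real.sqrt B := by
    have h1 : κ * A + B + (1 / κ) * N + (1 / κ) * D ≤ -E := by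
      rw [← heq]; nlinarith [hCle]
    calc κ * A + B + (1 / κ) * N + (1 / κ) * D ≤ -E := h1
      _ ≤ MF * Real.sqrt G := hEbound
      _ ≤ MF * (cP * Real.sqrt B) := by
          exact mul_le_mul_of_nonneg_left hsqG hMF0
      _ = cP * MF * Real.sqrt B := by ring
  have hsqB : Real.sqrt B ≤ cP * MF := by
    refine aux_sqrt_le_of_le_mul_sqrt hB0 (mul_nonneg hcP.le hMF0) ?_
    nlinarith [mul_nonneg hκ.le hA0, mul_nonneg hκ'.le hN0, mul_nonneg hκ'.le hD0]
  have hS : κ * A + B + (1 / κ) * N + (1 / κ) * D ≤ (cP * MF) ^ 2 := by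
    calc κ * A + B + (1 / κ) * N + (1 / κ) * D ≤ cP * MF * Real.sqrt B := key
      _ ≤ cP * MF * (cP * MF) := mul_le_mul_of_nonneg_left hsqB (mul_nonneg hcP.le hMF0)
      _ = (cP * MF) ^ 2 := by ring
  have hκsq : Real.sqrt κ ^ 2 = κ := Real.sq_sqrt hκ.le
  have hκs0 : 0 ≤ Real.sqrt κ := Real.sqrt_nonneg κ
  -- goal 1
  have goal1 : Real.sqrt (∑ i : Fin 2, ‖ξ i‖ ^ 2) ≤ cP ^ 2 * MF := by
    refine aux_sqrt_le_of_sq_le (by positivity) ?_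
    have hBsq : B ≤ (cP * MF) ^ 2 := by
      have := Real.sq_sqrt hB0
      nlinarith [Real.sqrt_nonneg B]
    nlinarith [hxisum, sq_nonneg cP]
  -- goal 2
  have goal2 : Real.sqrt N ≤ cP * MF * Real.sqrt κ := by
    refine aux_sqrt_le_of_sq_le (by positivity) ?_
    have hNle : (1 / κ) * N ≤ (cP * MF) ^ 2 := by
      nlinarith [mul_nonneg hκ.le hA0, mul_nonneg hκ'.le hD0]
    have : N ≤ κ * (cP * MF) ^ 2 := by
      rw [div_mul_eq_mul_div, one_mul, div_le_iff₀ hκ] at hNle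
      linarith [hNle]
    calc N ≤ κ * (cP * MF) ^ 2 := this
      _ = (cP * MF * Real.sqrt κ) ^ 2 := by rw [mul_pow (cP * MF) (Real.sqrt κ) 2, hκsq]; ring
  -- goal 3
  have goal3D : Real.sqrt D ≤ cP * MF * Real.sqrt κ := by
    refine aux_sqrt_le_of_sq_le (by positivity) ?_
    have hDle : (1 / κ) * D ≤ (cP * MF) ^ 2 := by
      nlinarith [mul_nonneg hκ.le hA0, mul_nonneg hκ'.le hN0]
    have : D ≤ κ * (cP * MF) ^ 2 := by
      rw [div_mul_eq_mul_div, one_mul, div_le_iff₀ hκ] at hDle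
      linarith [hDle]
    calc D ≤ κ * (cP * MF) ^ 2 := this
      _ = (cP * MF * Real.sqrt κ) ^ 2 := by rw [mul_pow (cP * MF) (Real.sqrt κ) 2, hκsq]; ring
  have hDrev : (∫ y in ω, ∑ i : Fin 2, (ι (ξ i) y - pd i (ι u) y) ^ 2) = D := by
    rw [hD_def]
    exact integral_congr_ae (Filter.Eventually.of_forall fun y =>
      Finset.sum_congr rfl fun i _ => by ring)
  -- goal 4 : Minkowski
  have hpg : ∀ i, MemLp (fun y => pd i (ι u) y - ι (ξ i) y) 2 μ :=
    fun i => (hgradL2 u i).sub (hL2 (ξ i))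
  have hI : (∫ y in ω, ∑ i : Fin 2, (pd i (ι u) y - ι (ξ i) y) * ι (ξ i) y)
      ≤ Real.sqrt D * Real.sqrt G := by
    rw [hD_def, hG_def]
    have h := aux_CS2 (μ := μ) (f := fun i y => pd i (ι u) y - ι (ξ i) y)
      (g := fun i y => ι (ξ i) y) hpg (fun i => hL2 (ξ i))
    exact h
  set I : ℝ := ∫ y in ω, ∑ i : Fin 2, (pd i (ι u) y - ι (ξ i) y) * ι (ξ i) y with hI_def
  clear_value I
  have hAsplit : A = D + 2 * I + G := by
    have hint1 : Integrable (fun y => ∑ i : Fin 2, (pd i (ι u) y - ι (ξ i) y) ^ 2) μ :=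
      integrable_finset_sum _ fun i _ => (hpg i).integrable_sq
    have hint2 : Integrable (fun y => ∑ i : Fin 2, (pd i (ι u) y - ι (ξ i) y) * ι (ξ i) y) μ :=
      integrable_finset_sum _ fun i _ => aux_integrable_mul (hpg i) (hL2 (ξ i))
    have hint3 : Integrable (fun y => ∑ i : Fin 2, ι (ξ i) y ^ 2) μ :=
      integrable_finset_sum _ fun i _ => (hL2 (ξ i)).integrable_sq
    have h1 : A = ∫ y in ω, ((∑ i : Fin 2, (pd i (ι u) y - ι (ξ i) y) ^ 2)
        + (2 * ∑ i : Fin 2, (pd i (ι u) y - ι (ξ i) y) * ι (ξ i) y)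
        + (∑ i : Fin 2, ι (ξ i) y ^ 2)) := by
      rw [hA_def]
      refine integral_congr_ae (Filter.Eventually.of_forall fun y => ?_)
      simp only [Fin.sum_univ_two]
      ring
    have hint2' : Integrable (fun y => 2 * ∑ i : Fin 2,
        (pd i (ι u) y - ι (ξ i) y) * ι (ξ i) y) μ := hint2.const_mul 2
    have hint12 : Integrable (fun y => (∑ i : Fin 2, (pd i (ι u) y - ι (ξ i) y) ^ 2)
        + 2 * ∑ i : Fin 2, (pd i (ι u) y - ι (ξ i) y) * ι (ξ i) y) μ := hint1.add hint2'
    rw [h1, integral_add hint12 hint3, integral_add hint1 hint2', integral_const_mul,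
      ← hD_def, ← hG_def, ← hI_def]
  have hsqA : Real.sqrt A ≤ Real.sqrt D + Real.sqrt G := by
    refine aux_sqrt_le_of_sq_le (add_nonneg (Real.sqrt_nonneg D) (Real.sqrt_nonneg G)) ?_
    have hD2 := Real.sq_sqrt hD0
    have hG2 := Real.sq_sqrt hG0
    nlinarith [hI, hAsplit]
  have goal4 : ‖u‖ ≤ cP ^ 2 * MF * (Real.sqrt κ + cP) := by
    have h1 := hPF u
    rw [← hA_def] at h1
    have hsqGle : Real.sqrt G ≤ cP * (cP * MF) :=
      hsqG.trans (mul_le_mul_of_nonneg_left hsqB hcP.le)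
    calc ‖u‖ ≤ cP * Real.sqrt A := h1
      _ ≤ cP * (Real.sqrt D + Real.sqrt G) := mul_le_mul_of_nonneg_left hsqA hcP.le
      _ ≤ cP * (cP * MF * Real.sqrt κ + cP * (cP * MF)) := by
          refine mul_le_mul_of_nonneg_left (add_le_add goal3D hsqGle) hcP.le
      _ = cP ^ 2 * MF * (Real.sqrt κ + cP) := by ring
  exact ⟨goal1, goal2, by rw [hDrev]; exact goal3D, goal4⟩
end
end
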